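/- arXiv:1511.01527 — 2 statements merged into one kernel-verified Lean document; each statement's English description precedes it below -/
import Mathlib

section
/- For t > 1, the family of equilibrium states (μ_{t f_k})_{k∈ℕ} on the compact subshifts Σ_k is tight in the space of Borel probability measures on Σ. -/
open MeasureTheory Filter

/-- The shift map on one-sided sequences. -/
def shift : (ℕ → ℕ) → (ℕ → ℕ) := fun x n => x (n + 1)

/-- The countable Markov shift determined by the transition matrix `M`. -/
def mshift (M : ℕ → ℕ → Prop) : Set (ℕ → ℕ) := {x | ∀ n, M (x n) (x (n + 1))}

/-- The 1-cylinder `[i] = {x ∈ Σ : x₀ = i}`. -/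
def cyl (M : ℕ → ℕ → Prop) (i : ℕ) : Set (ℕ → ℕ) := {x ∈ mshift M | x 0 = i}

/-- `sup f|_[i]`. -/
noncomputable def supCyl (M : ℕ → ℕ → Prop) (f : (ℕ → ℕ) → ℝ) (i : ℕ) : ℝ :=
  sSup (f '' cyl M i)

/-- For `t > 1`, the family of equilibrium states `(μ_{t f_k})_k` on an
increasing exhausting sequence of compact subshifts `Σ_k` of `Σ` is tight.  Here the
equilibrium state `μ_k` of `t f_k` on `Σ_k` is encoded through its defining Gibbs property
on 1-cylinders:
`exp(-4 V(tf)) ≤ μ_k[i] / exp(t f(x) − P_k) ≤ exp(4 V(tf))` for every `x ∈ Σ_k ∩ [i]`,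
where `V` bounds the total variation `V(f)` and `P_k = P_G(t f_k)`. -/
theorem equilibrium_states_tight (M : ℕ → ℕ → Prop) (f : (ℕ → ℕ) → ℝ)
    (t V : ℝ) (ht : 1 < t) (hV : 0 ≤ V)
    (hle : ∀ x ∈ mshift M, f x ≤ 0)
    (hsum : Summable fun i => Real.exp (supCyl M f i))
    (S : ℕ → Set (ℕ → ℕ))
    (hSsub : ∀ k, S k ⊆ mshift M) (hSinc : ∀ k, S k ⊆ S (k + 1))
    (hScomp : ∀ k, IsCompact (S k)) (hSclosed : ∀ k, IsClosed (S k))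
    (hSinv : ∀ k, shift '' S k ⊆ S k) (hSne : (S 0).Nonempty)
    (μ : ℕ → Measure (ℕ → ℕ)) (hprob : ∀ k, IsProbabilityMeasure (μ k))
    (hsupp : ∀ k, μ k (S k)ᶜ = 0)
    (hinv : ∀ k, MeasurePreserving shift (μ k) (μ k))
    (P : ℕ → ℝ)
    (hGibbs : ∀ k i, ∀ x ∈ S k ∩ cyl M i,
      ENNReal.ofReal (Real.exp (-(4 * t * V)) * Real.exp (t * f x - P k)) ≤ μ k {y | y 0 = i} ∧
      μ k {y | y 0 = i} ≤ ENNReal.ofReal (Real.exp (4 * t * V) * Real.exp (t * f x - P k))) :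
    ∀ ε : ENNReal, 0 < ε →
      ∃ K ⊆ mshift M, IsCompact K ∧ ∀ k, μ k Kᶜ < ε := by
  
  intro ε hε
  obtain ⟨x₀, hx₀⟩ := hSne
  have hx₀k : ∀ k, x₀ ∈ S k := by
    intro k
    induction k with
    | zero => exact hx₀
    | succ n ih => exact hSinc n ih
  have hx₀M : x₀ ∈ mshift M := hSsub 0 hx₀
  set C : ℝ := 4 * t * V - t * f x₀ with hC
  -- uniform bound on -P k
  have hP : ∀ k, -P k ≤ C := by
    intro k
    have hmem : x₀ ∈ S k ∩ cyl M (x₀ 0) := ⟨hx₀k k, ⟨hx₀M, rfl⟩⟩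
    have h1 := (hGibbs k (x₀ 0) x₀ hmem).1
    have h2 : μ k {y | y 0 = x₀ 0} ≤ 1 := prob_le_one
    have h3 : ENNReal.ofReal (Real.exp (-(4 * t * V)) * Real.exp (t * f x₀ - P k)) ≤ 1 :=
      h1.trans h2
    rw [ENNReal.ofReal_le_one, ← Real.exp_add, Real.exp_le_one_iff] at h3
    simp only [hC]
    linarith
  -- uniform summable bound on cylinder measures
  set B : ℕ → ENNReal := fun i =>
    ENNReal.ofReal (Real.exp (4 * t * V + C) * Real.exp (supCyl M f i)) with hBdef
  have hBound : ∀ k i, μ k {y | y 0 = i} ≤ B i := by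
    intro k i
    by_cases hne : (S k ∩ cyl M i).Nonempty
    · obtain ⟨x, hxS, hxc⟩ := hne
      have h2 := (hGibbs k i x ⟨hxS, hxc⟩).2
      refine h2.trans (ENNReal.ofReal_le_ofReal ?_)
      rw [← Real.exp_add, ← Real.exp_add]
      apply Real.exp_le_exp.2
      have hfx : f x ≤ supCyl M f i := by
        apply le_csSup
        · exact ⟨0, fun y ⟨z, hz, hzy⟩ => hzy ▸ hle z hz.1⟩
        · exact ⟨x, hxc, rfl⟩
      have hfx0 : f x ≤ 0 := hle x (hSsub k hxS)
      have htf : t * f x ≤ f x := by nlinarith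
      have hPk := hP k
      linarith
    · have hsub : {y : ℕ → ℕ | y 0 = i} ⊆ (S k)ᶜ ∪ (S k ∩ cyl M i) := by
        intro y hy
        by_cases hyS : y ∈ S k
        · exact Or.inr ⟨hyS, ⟨hSsub k hyS, hy⟩⟩
        · exact Or.inl hyS
      have : μ k {y | y 0 = i} = 0 := by
        refine le_antisymm ?_ zero_le
        calc μ k {y | y 0 = i} ≤ μ k ((S k)ᶜ ∪ (S k ∩ cyl M i)) := measure_mono hsub
          _ ≤ μ k (S k)ᶜ + μ k (S k ∩ cyl M i) := measure_union_le _ _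
          _ = 0 := by
              rw [hsupp k, Set.not_nonempty_iff_eq_empty.1 hne, measure_empty, add_zero]
      rw [this]; exact zero_le
  have hBsum : (∑' i, B i) ≠ ⊤ := by
    have hsum2 : Summable (fun i => Real.exp (4 * t * V + C) * Real.exp (supCyl M f i)) :=
      hsum.mul_left _
    simp only [hBdef]
    rw [← ENNReal.ofReal_tsum_of_nonneg (fun i => by positivity) hsum2]
    exact ENNReal.ofReal_ne_top
  have htail := ENNReal.tendsto_sum_nat_add B hBsum
  obtain ⟨δ, hδpos, hδsum⟩ := ENNReal.exists_pos_sum_of_countable hε.ne' ℕ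
  have hN : ∀ n : ℕ, ∃ Nn : ℕ, (∑' i, B (i + Nn)) ≤ (δ n : ENNReal) := by
    intro n
    rw [ENNReal.tendsto_atTop_zero] at htail
    obtain ⟨Nn, hNn⟩ := htail (δ n) (by exact_mod_cast hδpos n)
    exact ⟨Nn, hNn Nn le_rfl⟩
  choose N hNle using hN
  -- measurability of 1-coordinate sets
  have hmeas0 : ∀ Nn : ℕ, MeasurableSet {x : ℕ → ℕ | Nn ≤ x 0} := by
    intro Nn
    exact (measurable_pi_apply 0) (measurableSet_Ici (a := Nn))
  -- shift-iterate: n-th coordinate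
  have hiter : ∀ n (x : ℕ → ℕ), shift^[n] x 0 = x n := by
    intro n
    induction n with
    | zero => intro x; rfl
    | succ m ih =>
        intro x
        rw [Function.iterate_succ_apply]
        rw [ih (shift x)]
        rfl
  have hmeasInv : ∀ k n Nn, μ k {x | Nn ≤ x n} = μ k {x | Nn ≤ x 0} := by
    intro k n Nn
    have hmp : MeasurePreserving (shift^[n]) (μ k) (μ k) := (hinv k).iterate n
    have hpre : {x : ℕ → ℕ | Nn ≤ x n} = (shift^[n]) ⁻¹' {x | Nn ≤ x 0} := by
      ext x
      simp [Set.mem_preimage, hiter n x]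
    rw [hpre, hmp.measure_preimage (hmeas0 Nn).nullMeasurableSet]
  -- bound on tail coordinate sets
  have hcoord : ∀ k n, μ k {x | N n ≤ x 0} ≤ (δ n : ENNReal) := by
    intro k n
    have hU : {x : ℕ → ℕ | N n ≤ x 0} = ⋃ j : ℕ, {x | x 0 = j + N n} := by
      ext x
      simp only [Set.mem_setOf_eq, Set.mem_iUnion]
      constructor
      · intro h; exact ⟨x 0 - N n, by omega⟩
      · rintro ⟨j, hj⟩; omega
    calc μ k {x | N n ≤ x 0} = μ k (⋃ j : ℕ, {x | x 0 = j + N n}) := by rw [hU]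
      _ ≤ ∑' j : ℕ, μ k {x | x 0 = j + N n} := measure_iUnion_le _
      _ ≤ ∑' j : ℕ, B (j + N n) := ENNReal.tsum_le_tsum fun j => hBound k (j + N n)
      _ ≤ (δ n : ENNReal) := hNle n
  -- the compact set
  have hMclosed : IsClosed (mshift M) := by
    have hrw : mshift M = ⋂ n, {x : ℕ → ℕ | M (x n) (x (n + 1))} := by
      ext x; simp [mshift]
    rw [hrw]
    refine isClosed_iInter fun n => ?_
    have hrw2 : {x : ℕ → ℕ | M (x n) (x (n + 1))} =
        (fun x : ℕ → ℕ => (x n, x (n + 1))) ⁻¹' {p : ℕ × ℕ | M p.1 p.2} := rfl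
    rw [hrw2]
    exact (isClosed_discrete _).preimage ((continuous_apply n).prodMk (continuous_apply (n + 1)))
  set Q : Set (ℕ → ℕ) := Set.pi Set.univ (fun n => Set.Iio (N n)) with hQdef
  refine ⟨mshift M ∩ Q, Set.inter_subset_left, ?_, ?_⟩
  · have hQcomp : IsCompact Q :=
      isCompact_univ_pi (fun n => (Set.finite_Iio _).isCompact)
    exact hQcomp.inter_left hMclosed
  · intro k
    have hsub : (mshift M ∩ Q)ᶜ ⊆ (S k)ᶜ ∪ ⋃ n, {x : ℕ → ℕ | N n ≤ x n} := by
      intro x hx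
      by_cases hxS : x ∈ S k
      · refine Or.inr ?_
        have hxM : x ∈ mshift M := hSsub k hxS
        have hxQ : x ∉ Q := fun hQx => hx ⟨hxM, hQx⟩
        simp only [hQdef, Set.mem_pi, Set.mem_univ, Set.mem_Iio, true_implies, not_forall,
          not_lt] at hxQ
        obtain ⟨n, hn⟩ := hxQ
        exact Set.mem_iUnion.2 ⟨n, hn⟩
      · exact Or.inl hxS
    calc μ k (mshift M ∩ Q)ᶜ
        ≤ μ k ((S k)ᶜ ∪ ⋃ n, {x : ℕ → ℕ | N n ≤ x n}) := measure_mono hsub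
      _ ≤ μ k (S k)ᶜ + μ k (⋃ n, {x : ℕ → ℕ | N n ≤ x n}) := measure_union_le _ _
      _ = μ k (⋃ n, {x : ℕ → ℕ | N n ≤ x n}) := by rw [hsupp k, zero_add]
      _ ≤ ∑' n, μ k {x : ℕ → ℕ | N n ≤ x n} := measure_iUnion_le _
      _ = ∑' n, μ k {x : ℕ → ℕ | N n ≤ x 0} := by
          refine tsum_congr fun n => hmeasInv k n (N n)
      _ ≤ ∑' n, (δ n : ENNReal) := ENNReal.tsum_le_tsum fun n => hcoord k n
      _ < ε := hδsum
end

section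
/- Upper semicontinuity of entropy along the subsequence: if μ_{k_l} → μ weakly*, and for every N there is n₀ ≥ N with H(μ | α^{n₀}) = lim_l H(μ_{k_l} | α^{n₀}) < ∞, then limsup_l h(μ_{k_l}) ≤ h(μ), where h(ν) = inf_n (1/n) H(ν | α^n). -/
open MeasureTheory Filter Topology ENNReal

/-- The length-`n` cylinder determined by the word `ω`. -/
def cylN (n : ℕ) (ω : Fin n → ℕ) : Set (ℕ → ℕ) := {x | ∀ m : Fin n, x m = ω m}

/-- The partition entropy `H(μ | α^n) = ∑_{[ω] ∈ α^n} −μ[ω] log μ[ω]`, valued in `[0,∞]`. -/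
noncomputable def partEnt (μ : Measure (ℕ → ℕ)) (n : ℕ) : ℝ≥0∞ :=
  ∑' ω : Fin n → ℕ, ENNReal.ofReal (-((μ (cylN n ω)).toReal * Real.log (μ (cylN n ω)).toReal))

/-- The Kolmogorov–Sinai entropy of a shift-invariant measure, computed with the generating
partition into cylinders: `h(μ) = inf_n (1/n) H(μ | α^n)`. -/
noncomputable def ent (μ : Measure (ℕ → ℕ)) : ℝ≥0∞ :=
  ⨅ n : ℕ, partEnt μ (n + 1) / (n + 1)

noncomputable def phi (t : ℝ≥0∞) : ℝ≥0∞ := ENNReal.ofReal (Real.negMulLog t.toReal)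

lemma partEnt_eq (μ : Measure (ℕ → ℕ)) (n : ℕ) :
    partEnt μ n = ∑' ω : Fin n → ℕ, phi (μ (cylN n ω)) := by
  simp [partEnt, phi, Real.negMulLog, neg_mul]

lemma measurableSet_cylN (n : ℕ) (ω : Fin n → ℕ) : MeasurableSet (cylN n ω) := by
  have h : cylN n ω = ⋂ m : Fin n, (fun x : ℕ → ℕ => x m) ⁻¹' {ω m} := by
    ext x; simp [cylN]
  rw [h]
  exact MeasurableSet.iInter fun m => (measurable_pi_apply _) (measurableSet_singleton _)

lemma measurable_shift : Measurable shift :=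
  measurable_pi_lambda _ fun n => measurable_pi_apply _

lemma shift_iterate (m : ℕ) (x : ℕ → ℕ) (k : ℕ) : shift^[m] x k = x (k + m) := by
  induction m generalizing x with
  | zero => rfl
  | succ m ih =>
    rw [Function.iterate_succ_apply, ih]
    simp [shift, Nat.add_assoc]

/-- Generic partition identity: the pullbacks of length-`n` cylinders under a measurable
map partition the space. -/
lemma tsum_measure_inter_cyl (μ : Measure (ℕ → ℕ)) {A : Set (ℕ → ℕ)} (hA : MeasurableSet A)
    {f : (ℕ → ℕ) → (ℕ → ℕ)} (hf : Measurable f) (n : ℕ) :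
    ∑' ω : Fin n → ℕ, μ (A ∩ f ⁻¹' cylN n ω) = μ A := by
  have hd : Pairwise (Function.onFun Disjoint fun ω : Fin n → ℕ => A ∩ f ⁻¹' cylN n ω) := by
    intro ω ω' hne
    refine Set.disjoint_left.2 ?_
    rintro x ⟨-, hx⟩ ⟨-, hx'⟩
    apply hne
    funext m
    rw [← hx m, ← hx' m]
  have hm : ∀ ω : Fin n → ℕ, MeasurableSet (A ∩ f ⁻¹' cylN n ω) :=
    fun ω => hA.inter (hf (measurableSet_cylN n ω))
  have hu : (⋃ ω : Fin n → ℕ, A ∩ f ⁻¹' cylN n ω) = A := by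
    ext x
    simp only [Set.mem_iUnion, Set.mem_inter_iff, Set.mem_preimage, cylN, Set.mem_setOf_eq]
    constructor
    · rintro ⟨ω, hx, -⟩; exact hx
    · intro hx; exact ⟨fun m => f x m, hx, fun m => rfl⟩
  rw [← measure_iUnion hd hm, hu]

def spliceEquiv (m n : ℕ) : ((Fin m → ℕ) × (Fin n → ℕ)) ≃ (Fin (m + n) → ℕ) :=
  (Equiv.sumArrowEquivProdArrow _ _ ℕ).symm.trans (Equiv.arrowCongr finSumFinEquiv (Equiv.refl ℕ))

lemma cylN_splice (m n : ℕ) (i : Fin m → ℕ) (j : Fin n → ℕ) :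
    cylN (m + n) (spliceEquiv m n (i, j)) = cylN m i ∩ shift^[m] ⁻¹' cylN n j := by
  have he : ∀ k : Fin (m + n), spliceEquiv m n (i, j) k = Sum.elim i j (finSumFinEquiv.symm k) := by
    intro k
    simp [spliceEquiv, Equiv.sumArrowEquivProdArrow, Equiv.arrowCongr]
  ext x
  simp only [cylN, Set.mem_setOf_eq, Set.mem_inter_iff, Set.mem_preimage]
  constructor
  · intro h
    refine ⟨fun a => ?_, fun b => ?_⟩
    · have := h (Fin.castAdd n a)
      rw [he, finSumFinEquiv_symm_apply_castAdd] at this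
      simpa using this
    · have := h (Fin.natAdd m b)
      rw [he, finSumFinEquiv_symm_apply_natAdd] at this
      simpa [shift_iterate, Nat.add_comm] using this
  · rintro ⟨h₁, h₂⟩ k
    rw [he]
    have hk : k = finSumFinEquiv (finSumFinEquiv.symm k) := (Equiv.apply_symm_apply _ _).symm
    rcases hs : finSumFinEquiv.symm k with a | b <;> rw [hs] at hk
    · rw [finSumFinEquiv_apply_left] at hk
      subst hk; simpa using h₁ a
    · rw [finSumFinEquiv_apply_right] at hk
      subst hk
      have := h₂ b
      rw [shift_iterate] at this
      simpa [Nat.add_comm] using this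
open Real in
/-- `-p log p ≤ -p log q + q - p` when `0 ≤ p`, `0 ≤ q` and `q = 0 → p = 0`. -/
lemma pointwise_gibbs {p q : ℝ} (hp : 0 ≤ p) (hq : 0 ≤ q) (hpq : 0 < p → 0 < q) :
    negMulLog p ≤ -(p * log q) + q - p := by
  rcases eq_or_lt_of_le hp with h | h
  · simp [← h, hq]
  · have hq' := hpq h
    have h1 : log (q / p) ≤ q / p - 1 := log_le_sub_one_of_pos (by positivity)
    rw [log_div (ne_of_gt hq') (ne_of_gt h)] at h1
    have h2 : p * (log q - log p) ≤ p * (q / p - 1) := by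
      exact mul_le_mul_of_nonneg_left h1 (le_of_lt h)
    have h3 : p * (q / p - 1) = q - p := by field_simp
    rw [h3] at h2
    simp only [negMulLog]
    nlinarith

open Real in
lemma pointwise_gibbs' {p a b : ℝ} (hp : 0 ≤ p) (hpa : p ≤ a) (hpb : p ≤ b)
    (ha : 0 ≤ a) (hb : 0 ≤ b) :
    negMulLog p ≤ -(log a) * p + -(log b) * p + a * b - p := by
  rcases eq_or_lt_of_le hp with h | h
  · simp [← h]; positivity
  · have ha' : 0 < a := lt_of_lt_of_le h hpa
    have hb' : 0 < b := lt_of_lt_of_le h hpb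
    have := pointwise_gibbs hp (by positivity : (0:ℝ) ≤ a * b) (fun _ => by positivity)
    rw [log_mul (ne_of_gt ha') (ne_of_gt hb')] at this
    nlinarith

open Real in
/-- Finite-rectangle Gibbs inequality. -/
lemma finset_gibbs {I J : Type*} (G : Finset I) (H : Finset J) (p : I → J → ℝ)
    (a : I → ℝ) (b : J → ℝ)
    (hp : ∀ i j, 0 ≤ p i j) (hpa : ∀ i j, p i j ≤ a i) (hpb : ∀ i j, p i j ≤ b j)
    (ha0 : ∀ i, 0 ≤ a i) (ha1 : ∀ i, a i ≤ 1) (hb0 : ∀ j, 0 ≤ b j) (hb1 : ∀ j, b j ≤ 1)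
    (hsa : ∀ i, ∑ j ∈ H, p i j ≤ a i) (hsb : ∀ j, ∑ i ∈ G, p i j ≤ b j) :
    ∑ i ∈ G, ∑ j ∈ H, negMulLog (p i j)
      ≤ ∑ i ∈ G, negMulLog (a i) + ∑ j ∈ H, negMulLog (b j)
        + ((∑ i ∈ G, a i) * (∑ j ∈ H, b j) - ∑ i ∈ G, ∑ j ∈ H, p i j) := by
  have step1 : ∑ i ∈ G, ∑ j ∈ H, negMulLog (p i j)
      ≤ ∑ i ∈ G, ∑ j ∈ H, (-(log (a i)) * p i j + -(log (b j)) * p i j + a i * b j - p i j) :=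
    Finset.sum_le_sum fun i _ => Finset.sum_le_sum fun j _ =>
      pointwise_gibbs' (hp i j) (hpa i j) (hpb i j) (ha0 i) (hb0 j)
  have hsplit : ∑ i ∈ G, ∑ j ∈ H, (-(log (a i)) * p i j + -(log (b j)) * p i j + a i * b j - p i j)
      = (∑ i ∈ G, ∑ j ∈ H, -(log (a i)) * p i j) + (∑ i ∈ G, ∑ j ∈ H, -(log (b j)) * p i j)
        + (∑ i ∈ G, ∑ j ∈ H, a i * b j) - ∑ i ∈ G, ∑ j ∈ H, p i j := by
    simp only [Finset.sum_add_distrib, Finset.sum_sub_distrib]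
  have hT1 : (∑ i ∈ G, ∑ j ∈ H, -(log (a i)) * p i j) ≤ ∑ i ∈ G, negMulLog (a i) := by
    refine Finset.sum_le_sum fun i _ => ?_
    rw [← Finset.mul_sum]
    have hnl : 0 ≤ -(log (a i)) := neg_nonneg.2 (log_nonpos (ha0 i) (ha1 i))
    calc -(log (a i)) * ∑ j ∈ H, p i j ≤ -(log (a i)) * a i :=
          mul_le_mul_of_nonneg_left (hsa i) hnl
      _ = negMulLog (a i) := by simp [negMulLog]; ring
  have hT2 : (∑ i ∈ G, ∑ j ∈ H, -(log (b j)) * p i j) ≤ ∑ j ∈ H, negMulLog (b j) := by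
    rw [Finset.sum_comm]
    refine Finset.sum_le_sum fun j _ => ?_
    rw [← Finset.mul_sum]
    have hnl : 0 ≤ -(log (b j)) := neg_nonneg.2 (log_nonpos (hb0 j) (hb1 j))
    calc -(log (b j)) * ∑ i ∈ G, p i j ≤ -(log (b j)) * b j :=
          mul_le_mul_of_nonneg_left (hsb j) hnl
      _ = negMulLog (b j) := by simp [negMulLog]; ring
  have hT3 : (∑ i ∈ G, ∑ j ∈ H, a i * b j) = (∑ i ∈ G, a i) * (∑ j ∈ H, b j) :=
    (Finset.sum_mul_sum G H a b).symm
  rw [hsplit, hT3] at step1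
  linarith
/-- Abstract entropy subadditivity for a countable joint distribution. -/
lemma core_subadd {I J : Type*} (p : I → J → ℝ≥0∞) (a : I → ℝ≥0∞) (b : J → ℝ≥0∞)
    (ha : ∀ i, ∑' j, p i j = a i) (hb : ∀ j, ∑' i, p i j = b j)
    (htot : ∑' (ij : I × J), p ij.1 ij.2 = 1) :
    ∑' ij : I × J, phi (p ij.1 ij.2) ≤ (∑' i, phi (a i)) + ∑' j, phi (b j) := by
  -- basic bounds
  classical
  have hsa : ∑' i, a i = 1 := by
    rw [← htot, ENNReal.tsum_prod]; exact tsum_congr fun i => (ha i).symm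
  have hsb : ∑' j, b j = 1 := by
    rw [← htot, ENNReal.tsum_prod, ENNReal.tsum_comm]
    exact tsum_congr fun j => (hb j).symm
  have ha1 : ∀ i, a i ≤ 1 := fun i => hsa ▸ ENNReal.le_tsum i
  have hb1 : ∀ j, b j ≤ 1 := fun j => hsb ▸ ENNReal.le_tsum j
  have hat : ∀ i, a i ≠ ⊤ := fun i => ne_top_of_le_ne_top one_ne_top (ha1 i)
  have hbt : ∀ j, b j ≠ ⊤ := fun j => ne_top_of_le_ne_top one_ne_top (hb1 j)
  have hpa : ∀ i j, p i j ≤ a i := fun i j => (ha i) ▸ ENNReal.le_tsum j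
  have hpb : ∀ i j, p i j ≤ b j := fun j i => (hb i) ▸ ENNReal.le_tsum j
  have hpt : ∀ i j, p i j ≠ ⊤ := fun i j => ne_top_of_le_ne_top (hat i) (hpa i j)
  refine ENNReal.le_of_forall_pos_le_add fun ε hε _ => ?_
  -- choose a finite rectangle carrying mass at least 1 - ε
  have h1ε : (1 : ℝ≥0∞) - ε < ⨆ F : Finset (I × J), ∑ ij ∈ F, p ij.1 ij.2 := by
    rw [← ENNReal.tsum_eq_iSup_sum, htot]
    exact ENNReal.sub_lt_self one_ne_top one_ne_zero (by exact_mod_cast hε.ne')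
  obtain ⟨F₀, hF₀⟩ := lt_iSup_iff.1 h1ε
  rw [ENNReal.tsum_eq_iSup_sum]
  refine iSup_le fun F => ?_
  set G : Finset I := (F ∪ F₀).image Prod.fst with hG
  set H : Finset J := (F ∪ F₀).image Prod.snd with hH
  have hsub : F ∪ F₀ ⊆ G ×ˢ H := by
    intro ij hij
    exact Finset.mem_product.2 ⟨Finset.mem_image_of_mem _ hij, Finset.mem_image_of_mem _ hij⟩
  calc ∑ ij ∈ F, phi (p ij.1 ij.2)
      ≤ ∑ ij ∈ G ×ˢ H, phi (p ij.1 ij.2) :=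
        Finset.sum_le_sum_of_subset ((Finset.subset_union_left).trans hsub)
    _ ≤ (∑' i, phi (a i)) + (∑' j, phi (b j)) + ↑ε := ?_
  -- convert to real sums
  have hmass : (1 : ℝ) ≤ (∑ ij ∈ G ×ˢ H, p ij.1 ij.2).toReal + (ε : ℝ) := by
    have hFsub : ∑ ij ∈ F₀, p ij.1 ij.2 ≤ ∑ ij ∈ G ×ˢ H, p ij.1 ij.2 :=
      Finset.sum_le_sum_of_subset ((Finset.subset_union_right).trans hsub)
    have h2 : (1 : ℝ≥0∞) ≤ ∑ ij ∈ G ×ˢ H, p ij.1 ij.2 + ε :=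
      le_trans (tsub_le_iff_right.1 hF₀.le) (add_le_add_left hFsub _)
    have hfin : (∑ ij ∈ G ×ˢ H, p ij.1 ij.2) ≠ ⊤ :=
      (lt_of_le_of_lt (Finset.sum_le_sum fun ij _ => hpa ij.1 ij.2)
        (lt_of_le_of_lt (Finset.sum_le_sum fun ij _ => ha1 ij.1) (by
          simp only [Finset.sum_const, nsmul_eq_mul, mul_one]
          exact (ENNReal.natCast_lt_top _)))).ne
    calc (1:ℝ) = (1:ℝ≥0∞).toReal := by simp
      _ ≤ ((∑ ij ∈ G ×ˢ H, p ij.1 ij.2) + ε).toReal := by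
          exact ENNReal.toReal_mono (by simp [hfin]) h2
      _ = (∑ ij ∈ G ×ˢ H, p ij.1 ij.2).toReal + (ε:ℝ) := by
          rw [ENNReal.toReal_add hfin coe_ne_top]; simp
  -- the real Gibbs bound
  have hreal : ∑ i ∈ G, ∑ j ∈ H, Real.negMulLog (p i j).toReal
      ≤ ∑ i ∈ G, Real.negMulLog (a i).toReal + ∑ j ∈ H, Real.negMulLog (b j).toReal
        + (1 - (∑ ij ∈ G ×ˢ H, p ij.1 ij.2).toReal) := by
    have hg := finset_gibbs G H (fun i j => (p i j).toReal) (fun i => (a i).toReal)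
      (fun j => (b j).toReal)
      (fun i j => ENNReal.toReal_nonneg)
      (fun i j => ENNReal.toReal_mono (hat i) (hpa i j))
      (fun i j => ENNReal.toReal_mono (hbt j) (hpb i j))
      (fun i => ENNReal.toReal_nonneg)
      (fun i => by simpa using ENNReal.toReal_mono one_ne_top (ha1 i))
      (fun j => ENNReal.toReal_nonneg)
      (fun j => by simpa using ENNReal.toReal_mono one_ne_top (hb1 j))
      (fun i => by
        rw [← ENNReal.toReal_sum (fun j _ => hpt i j)]
        exact ENNReal.toReal_mono (hat i) ((ha i) ▸ ENNReal.sum_le_tsum H))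
      (fun j => by
        rw [← ENNReal.toReal_sum (fun i _ => hpt i j)]
        exact ENNReal.toReal_mono (hbt j) ((hb j) ▸ ENNReal.sum_le_tsum G))
    refine hg.trans ?_
    have h1 : (∑ i ∈ G, (a i).toReal) ≤ 1 := by
      rw [← ENNReal.toReal_sum (fun i _ => hat i)]
      exact by simpa using ENNReal.toReal_mono one_ne_top (hsa ▸ ENNReal.sum_le_tsum G)
    have h2 : (∑ j ∈ H, (b j).toReal) ≤ 1 := by
      rw [← ENNReal.toReal_sum (fun j _ => hbt j)]
      exact by simpa using ENNReal.toReal_mono one_ne_top (hsb ▸ ENNReal.sum_le_tsum H)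
    have h3 : (∑ ij ∈ G ×ˢ H, p ij.1 ij.2).toReal = ∑ i ∈ G, ∑ j ∈ H, (p i j).toReal := by
      rw [ENNReal.toReal_sum (fun ij _ => hpt ij.1 ij.2), Finset.sum_product]
    have h4 : 0 ≤ ∑ i ∈ G, ∑ j ∈ H, (p i j).toReal :=
      Finset.sum_nonneg fun i _ => Finset.sum_nonneg fun j _ => ENNReal.toReal_nonneg
    have h5 : (0:ℝ) ≤ ∑ j ∈ H, (b j).toReal :=
      Finset.sum_nonneg fun j _ => ENNReal.toReal_nonneg
    rw [h3]
    have : (∑ i ∈ G, (a i).toReal) * (∑ j ∈ H, (b j).toReal) ≤ 1 := by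
      nlinarith
    linarith
  -- back to ℝ≥0∞
  have hofsum : ∑ ij ∈ G ×ˢ H, phi (p ij.1 ij.2)
      = ENNReal.ofReal (∑ i ∈ G, ∑ j ∈ H, Real.negMulLog (p i j).toReal) := by
    rw [Finset.sum_product]
    rw [ENNReal.ofReal_sum_of_nonneg (fun i _ => Finset.sum_nonneg fun j _ =>
      Real.negMulLog_nonneg ENNReal.toReal_nonneg
        (by simpa using ENNReal.toReal_mono one_ne_top ((hpa i _).trans (ha1 i))))]
    refine Finset.sum_congr rfl fun i _ => ?_
    rw [ENNReal.ofReal_sum_of_nonneg (fun j _ => Real.negMulLog_nonneg ENNReal.toReal_nonneg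
        (by simpa using ENNReal.toReal_mono one_ne_top ((hpa i j).trans (ha1 i))))]
    rfl
  rw [hofsum]
  have hδ : (1 - (∑ ij ∈ G ×ˢ H, p ij.1 ij.2).toReal) ≤ (ε:ℝ) := by linarith
  calc ENNReal.ofReal (∑ i ∈ G, ∑ j ∈ H, Real.negMulLog (p i j).toReal)
      ≤ ENNReal.ofReal (∑ i ∈ G, Real.negMulLog (a i).toReal
          + ∑ j ∈ H, Real.negMulLog (b j).toReal
          + (1 - (∑ ij ∈ G ×ˢ H, p ij.1 ij.2).toReal)) := ENNReal.ofReal_le_ofReal hreal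
    _ ≤ ENNReal.ofReal (∑ i ∈ G, Real.negMulLog (a i).toReal)
          + ENNReal.ofReal (∑ j ∈ H, Real.negMulLog (b j).toReal)
          + ENNReal.ofReal (1 - (∑ ij ∈ G ×ˢ H, p ij.1 ij.2).toReal) :=
        le_trans (ENNReal.ofReal_add_le) (by gcongr; exact ENNReal.ofReal_add_le)
    _ ≤ (∑' i, phi (a i)) + (∑' j, phi (b j)) + ↑ε := by
        gcongr
        · rw [ENNReal.ofReal_sum_of_nonneg (fun i _ => Real.negMulLog_nonneg
            ENNReal.toReal_nonneg (by simpa using ENNReal.toReal_mono one_ne_top (ha1 i)))]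
          exact ENNReal.sum_le_tsum G
        · rw [ENNReal.ofReal_sum_of_nonneg (fun j _ => Real.negMulLog_nonneg
            ENNReal.toReal_nonneg (by simpa using ENNReal.toReal_mono one_ne_top (hb1 j)))]
          exact ENNReal.sum_le_tsum H
        · exact le_trans (ENNReal.ofReal_le_ofReal hδ) (by simp)
lemma phi_eq {t : ℝ≥0∞} (ht : t ≠ ⊤) (h1 : t.toReal ≤ 1) :
    phi t = ENNReal.ofReal (-(Real.log t.toReal)) * t := by
  have e1 : Real.negMulLog t.toReal = (-(Real.log t.toReal)) * t.toReal := by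
    rw [Real.negMulLog]; ring
  rw [phi, e1, ENNReal.ofReal_mul (neg_nonneg.2 (Real.log_nonpos ENNReal.toReal_nonneg h1)),
    ENNReal.ofReal_toReal ht]

/-- Concavity-flavoured bound: `phi` of a subprobability total is at most the sum of `phi`s. -/
lemma phi_tsum_le {J : Type*} (p : J → ℝ≥0∞) (h1 : (∑' j, p j) ≤ 1) :
    phi (∑' j, p j) ≤ ∑' j, phi (p j) := by
  set s := ∑' j, p j with hs
  have hst : s ≠ ⊤ := ne_top_of_le_ne_top one_ne_top h1
  have hs1 : s.toReal ≤ 1 := by simpa using ENNReal.toReal_mono one_ne_top h1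
  rw [phi_eq hst hs1, hs, ← ENNReal.tsum_mul_left]
  refine ENNReal.tsum_le_tsum fun j => ?_
  have hpj : p j ≤ s := ENNReal.le_tsum j
  have hpjt : p j ≠ ⊤ := ne_top_of_le_ne_top hst hpj
  rcases eq_or_ne (p j) 0 with h0 | h0
  · simp [h0]
  · have hppos : 0 < (p j).toReal := ENNReal.toReal_pos h0 hpjt
    have hp1 : (p j).toReal ≤ 1 := le_trans (ENNReal.toReal_mono hst hpj) hs1
    rw [phi_eq hpjt hp1]
    refine mul_le_mul_left (ENNReal.ofReal_le_ofReal ?_) _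
    have := Real.log_le_log hppos (ENNReal.toReal_mono hst hpj)
    linarith

lemma tsum_cyl (μ : Measure (ℕ → ℕ)) [IsProbabilityMeasure μ] (n : ℕ) :
    ∑' ω : Fin n → ℕ, μ (cylN n ω) = 1 := by
  have := tsum_measure_inter_cyl μ MeasurableSet.univ measurable_id n
  simpa using this

/-- Monotonicity of the partition entropy under refinement. -/
lemma partEnt_mono (μ : Measure (ℕ → ℕ)) [IsProbabilityMeasure μ] (m n : ℕ) :
    partEnt μ m ≤ partEnt μ (m + n) := by
  rw [partEnt_eq, partEnt_eq,
    ← (spliceEquiv m n).tsum_eq (fun ω => phi (μ (cylN (m + n) ω)))]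
  have hsplice : ∀ ij : (Fin m → ℕ) × (Fin n → ℕ),
      cylN (m + n) (spliceEquiv m n ij) = cylN m ij.1 ∩ shift^[m] ⁻¹' cylN n ij.2 := by
    rintro ⟨i, j⟩; exact cylN_splice m n i j
  calc ∑' i : Fin m → ℕ, phi (μ (cylN m i))
      = ∑' i : Fin m → ℕ, phi (∑' j : Fin n → ℕ, μ (cylN m i ∩ shift^[m] ⁻¹' cylN n j)) := by
        refine tsum_congr fun i => ?_
        rw [tsum_measure_inter_cyl μ (measurableSet_cylN m i) (measurable_shift.iterate m) n]
    _ ≤ ∑' i : Fin m → ℕ, ∑' j : Fin n → ℕ, phi (μ (cylN m i ∩ shift^[m] ⁻¹' cylN n j)) := by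
        refine ENNReal.tsum_le_tsum fun i => phi_tsum_le _ ?_
        rw [tsum_measure_inter_cyl μ (measurableSet_cylN m i) (measurable_shift.iterate m) n]
        exact prob_le_one
    _ = ∑' ij : (Fin m → ℕ) × (Fin n → ℕ), phi (μ (cylN (m + n) (spliceEquiv m n ij))) := by
        refine Eq.trans (ENNReal.tsum_prod
          (f := fun i j => phi (μ (cylN m i ∩ shift^[m] ⁻¹' cylN n j)))).symm ?_
        exact tsum_congr fun ij => by rw [hsplice ij]

/-- Subadditivity of the partition entropy for shift-invariant measures. -/
lemma partEnt_subadd (μ : Measure (ℕ → ℕ)) [IsProbabilityMeasure μ]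
    (hinv : MeasurePreserving shift μ μ) (m n : ℕ) :
    partEnt μ (m + n) ≤ partEnt μ m + partEnt μ n := by
  set p : (Fin m → ℕ) → (Fin n → ℕ) → ℝ≥0∞ :=
    fun i j => μ (cylN m i ∩ shift^[m] ⁻¹' cylN n j) with hp
  have ha : ∀ i, ∑' j, p i j = μ (cylN m i) := fun i =>
    tsum_measure_inter_cyl μ (measurableSet_cylN m i) (measurable_shift.iterate m) n
  have hb : ∀ j, ∑' i, p i j = μ (cylN n j) := by
    intro j
    have h1 : ∀ i, p i j = μ ((shift^[m] ⁻¹' cylN n j) ∩ id ⁻¹' cylN m i) := by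
      intro i; rw [hp]; simp [Set.inter_comm]
    calc ∑' i, p i j = ∑' i : Fin m → ℕ, μ ((shift^[m] ⁻¹' cylN n j) ∩ id ⁻¹' cylN m i) :=
          tsum_congr h1
      _ = μ (shift^[m] ⁻¹' cylN n j) :=
          tsum_measure_inter_cyl μ ((measurable_shift.iterate m) (measurableSet_cylN n j))
            measurable_id m
      _ = μ (cylN n j) :=
          (hinv.iterate m).measure_preimage (measurableSet_cylN n j).nullMeasurableSet
  have htot : ∑' (ij : (Fin m → ℕ) × (Fin n → ℕ)), p ij.1 ij.2 = 1 := by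
    rw [ENNReal.tsum_prod]
    rw [tsum_congr ha]
    exact tsum_cyl μ m
  have hcore := core_subadd p (fun i => μ (cylN m i)) (fun j => μ (cylN n j)) ha hb htot
  have hre : partEnt μ (m + n) = ∑' ij : (Fin m → ℕ) × (Fin n → ℕ), phi (p ij.1 ij.2) := by
    rw [partEnt_eq, ← (spliceEquiv m n).tsum_eq (fun ω => phi (μ (cylN (m + n) ω)))]
    refine tsum_congr fun ij => ?_
    obtain ⟨i, j⟩ := ij
    rw [cylN_splice m n i j]
  rw [hre, ← partEnt_eq, ← partEnt_eq] at *
  exact hcore.trans (by rw [partEnt_eq, partEnt_eq])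

lemma partEnt_zero (μ : Measure (ℕ → ℕ)) [IsProbabilityMeasure μ] : partEnt μ 0 = 0 := by
  rw [partEnt_eq]
  have h : ∀ ω : Fin 0 → ℕ, phi (μ (cylN 0 ω)) = 0 := by
    intro ω
    have huniv : cylN 0 ω = Set.univ := by ext x; simp [cylN]
    simp [phi, huniv, Real.negMulLog]
  simp [h]

lemma partEnt_mono' (μ : Measure (ℕ → ℕ)) [IsProbabilityMeasure μ] {r m : ℕ} (h : r ≤ m) :
    partEnt μ r ≤ partEnt μ m := by
  have := partEnt_mono μ r (m - r)
  rwa [Nat.add_sub_cancel' h] at this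

lemma partEnt_iter (μ : Measure (ℕ → ℕ)) [IsProbabilityMeasure μ]
    (hinv : MeasurePreserving shift μ μ) (m q r : ℕ) :
    partEnt μ (m * q + r) ≤ (q : ℝ≥0∞) * partEnt μ m + partEnt μ r := by
  induction q with
  | zero => simp
  | succ q ih =>
    have heq : m * (q + 1) + r = m + (m * q + r) := by ring
    rw [heq]
    calc partEnt μ (m + (m * q + r)) ≤ partEnt μ m + partEnt μ (m * q + r) :=
          partEnt_subadd μ hinv _ _
      _ ≤ partEnt μ m + ((q : ℝ≥0∞) * partEnt μ m + partEnt μ r) := by gcongr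
      _ = ((q : ℕ) + 1 : ℝ≥0∞) * partEnt μ m + partEnt μ r := by ring
      _ = (((q + 1 : ℕ)) : ℝ≥0∞) * partEnt μ m + partEnt μ r := by push_cast; ring

/-- upper semicontinuity of entropy along the subsequence.  If
`μ_{k_l} → μ` weakly*, and for every `N` there is `n₀ ≥ N` with
`H(μ | α^{n₀}) = lim_l H(μ_{k_l} | α^{n₀}) < ∞`, then `limsup_l h(μ_{k_l}) ≤ h(μ)`,
where `h(ν) = inf_n (1/n) H(ν | α^n)`. -/
theorem entropy_upper_semicontinuous (μ : ℕ → Measure (ℕ → ℕ)) (ν : Measure (ℕ → ℕ))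
    (hprob : ∀ l, IsProbabilityMeasure (μ l)) (hprobν : IsProbabilityMeasure ν)
    (hinv : ∀ l, MeasurePreserving shift (μ l) (μ l)) (hinvν : MeasurePreserving shift ν ν)
    (hconv : ∀ g : BoundedContinuousFunction (ℕ → ℕ) ℝ,
      Tendsto (fun l => ∫ x, g x ∂(μ l)) atTop (𝓝 (∫ x, g x ∂ν)))
    (hH : ∀ N : ℕ, ∃ n₀ : ℕ, N ≤ n₀ ∧ 1 ≤ n₀ ∧ partEnt ν n₀ < ⊤ ∧
      Tendsto (fun l => partEnt (μ l) n₀) atTop (𝓝 (partEnt ν n₀))) :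
    limsup (fun l => ent (μ l)) atTop ≤ ent ν := by
  set L := limsup (fun l => ent (μ l)) atTop with hLdef
  have hstep : ∀ N : ℕ, ∃ n₀ : ℕ, N ≤ n₀ ∧ 1 ≤ n₀ ∧ partEnt ν n₀ < ⊤ ∧
      L ≤ partEnt ν n₀ / n₀ := by
    intro N
    obtain ⟨n₀, hN, h1, hfin, htd⟩ := hH N
    refine ⟨n₀, hN, h1, hfin, ?_⟩
    have hcast : ((n₀ - 1 : ℕ) : ℝ≥0∞) + 1 = (n₀ : ℝ≥0∞) := by
      exact_mod_cast congrArg (Nat.cast : ℕ → ℝ≥0∞) (by omega : n₀ - 1 + 1 = n₀)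
    have hle : ∀ l, ent (μ l) ≤ partEnt (μ l) n₀ / (n₀ : ℝ≥0∞) := by
      intro l
      have h := iInf_le (fun k : ℕ => partEnt (μ l) (k + 1) / ((k : ℝ≥0∞) + 1)) (n₀ - 1)
      rw [Nat.sub_add_cancel h1, hcast] at h
      exact h
    have hn₀ : (n₀ : ℝ≥0∞) ≠ 0 := Nat.cast_ne_zero.2 (by omega)
    have hlim : Tendsto (fun l => partEnt (μ l) n₀ / (n₀ : ℝ≥0∞)) atTop
        (𝓝 (partEnt ν n₀ / (n₀ : ℝ≥0∞))) := by
      simp only [div_eq_mul_inv]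
      exact ENNReal.Tendsto.mul_const htd (Or.inr (ENNReal.inv_ne_top.2 hn₀))
    calc L ≤ limsup (fun l => partEnt (μ l) n₀ / (n₀ : ℝ≥0∞)) atTop :=
          limsup_le_limsup (Eventually.of_forall hle)
      _ = partEnt ν n₀ / (n₀ : ℝ≥0∞) := hlim.limsup_eq
  rw [ent]
  refine le_iInf fun n => ?_
  set m := n + 1 with hm
  rcases eq_or_ne (partEnt ν m) ⊤ with htop | hfin
  · refine le_trans le_top (le_of_eq ?_)
    rw [htop]
    rw [eq_comm, ENNReal.div_eq_top]
    exact Or.inr ⟨rfl, by exact_mod_cast (ENNReal.natCast_ne_top m)⟩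
  · set c := partEnt ν m with hc
    refine ENNReal.le_of_forall_pos_le_add fun ε hε _ => ?_
    have hε0 : (ε : ℝ≥0∞) ≠ 0 := by exact_mod_cast hε.ne'
    obtain ⟨Q, hQ⟩ := ENNReal.exists_nat_gt (ENNReal.div_lt_top hfin hε0).ne
    have hcQ : c / ((Q : ℝ≥0∞) + 1) ≤ ε := by
      have h1 : c ≤ (Q : ℝ≥0∞) * ε := by
        rw [← ENNReal.div_le_iff hε0 coe_ne_top]
        exact hQ.le
      have hQ1 : ((Q : ℝ≥0∞) + 1) ≠ 0 := (lt_of_lt_of_le zero_lt_one le_add_self).ne'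
      have hQ2 : ((Q : ℝ≥0∞) + 1) ≠ ⊤ :=
        ENNReal.add_ne_top.2 ⟨ENNReal.natCast_ne_top Q, one_ne_top⟩
      calc c / ((Q : ℝ≥0∞) + 1) ≤ (((Q : ℝ≥0∞) + 1) * ε) / ((Q : ℝ≥0∞) + 1) := by
            refine ENNReal.div_le_div (h1.trans ?_) le_rfl
            exact mul_le_mul_left le_self_add (ε : ℝ≥0∞)
        _ = ε := by
            have := ENNReal.mul_div_mul_left (ε : ℝ≥0∞) 1 hQ1 hQ2
            simpa using this
    obtain ⟨n₀, hN, h1, hfin₀, hLle⟩ := hstep ((Q + 1) * m)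
    set q := n₀ / m with hqdef
    set r := n₀ % m with hrdef
    have hmpos : 0 < m := Nat.succ_pos n
    have hqr : m * q + r = n₀ := Nat.div_add_mod n₀ m
    have hQq : Q + 1 ≤ q := (Nat.le_div_iff_mul_le hmpos).2 hN
    have hrm : r ≤ m := (Nat.mod_lt _ hmpos).le
    have hq1 : 1 ≤ q := le_trans (Nat.le_add_left 1 Q) hQq
    have hq0 : (q : ℝ≥0∞) ≠ 0 := Nat.cast_ne_zero.2 (by omega)
    have hsub : partEnt ν n₀ ≤ ((q : ℝ≥0∞) + 1) * c := by
      rw [← hqr]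
      calc partEnt ν (m * q + r) ≤ (q : ℝ≥0∞) * partEnt ν m + partEnt ν r :=
            partEnt_iter ν hinvν m q r
        _ ≤ (q : ℝ≥0∞) * c + c := by
            gcongr
            exact partEnt_mono' ν hrm
        _ = ((q : ℝ≥0∞) + 1) * c := by ring
    have hqm_le : ((q * m : ℕ) : ℝ≥0∞) ≤ (n₀ : ℝ≥0∞) := by
      have : q * m ≤ n₀ := by rw [mul_comm]; omega
      exact_mod_cast this
    calc L ≤ partEnt ν n₀ / (n₀ : ℝ≥0∞) := hLle
      _ ≤ (((q : ℝ≥0∞) + 1) * c) / ((q : ℝ≥0∞) * (m : ℝ≥0∞)) := by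
          refine ENNReal.div_le_div hsub ?_
          calc (q : ℝ≥0∞) * (m : ℝ≥0∞) = ((q * m : ℕ) : ℝ≥0∞) := by push_cast; ring
            _ ≤ (n₀ : ℝ≥0∞) := hqm_le
      _ = ((q : ℝ≥0∞) * c + c) / ((q : ℝ≥0∞) * (m : ℝ≥0∞)) := by ring_nf
      _ = ((q : ℝ≥0∞) * c) / ((q : ℝ≥0∞) * (m : ℝ≥0∞)) + c / ((q : ℝ≥0∞) * (m : ℝ≥0∞)) :=
          ENNReal.add_div
      _ = c / (m : ℝ≥0∞) + c / ((q : ℝ≥0∞) * (m : ℝ≥0∞)) := by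
          rw [ENNReal.mul_div_mul_left c (m : ℝ≥0∞) hq0 (ENNReal.natCast_ne_top q)]
      _ ≤ c / (m : ℝ≥0∞) + c / ((Q : ℝ≥0∞) + 1) := by
          gcongr
          calc ((Q : ℝ≥0∞) + 1) = ((Q + 1 : ℕ) : ℝ≥0∞) := by push_cast; ring
            _ ≤ (q : ℝ≥0∞) := by exact_mod_cast hQq
            _ ≤ (q : ℝ≥0∞) * (m : ℝ≥0∞) := le_mul_of_one_le_right zero_le (by
                exact_mod_cast hmpos)
      _ = partEnt ν (n + 1) / ((n : ℝ≥0∞) + 1) + c / ((Q : ℝ≥0∞) + 1) := by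
          rw [hc, hm]
          congr 2
          push_cast; ring
      _ ≤ partEnt ν (n + 1) / ((n : ℝ≥0∞) + 1) + ε := add_le_add_right hcQ _
end
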